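/- Every linear path has finitely many real-part-constancy segments: for any a, b, z ∈ ℂ, the path t ↦ (1−t)a + tb satisfies the finite_ReZ_segments property with respect to z. -/

import Mathlib

open Complex Filter Topology Polynomial Set

/-- A predicate `P` admits a finite segmentation of `[a,b]`. -/
inductive FinitePsegments (P : ℝ → Prop) : ℝ → ℝ → Prop where
  | emptyI (a b : ℝ) (hab : b ≤ a) : FinitePsegments P a b
  | insertI_1 (a b s : ℝ) (hs : s ∈ Set.Ico a b) (h0 : s = a ∨ P s)
      (hP : ∀ t ∈ Set.Ioo s b, P t) (hrec : FinitePsegments P a s) :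
      FinitePsegments P a b
  | insertI_2 (a b s : ℝ) (hs : s ∈ Set.Ico a b) (h0 : s = a ∨ P s)
      (hP : ∀ t ∈ Set.Ioo s b, ¬ P t) (hrec : FinitePsegments P a s) :
      FinitePsegments P a b

/-- `[0,1]` decomposes into finitely many consecutive subintervals on each of whose
interiors `Re (γ t - z) = 0` holds identically or fails identically. -/
def finiteReZSegments (γ : ℝ → ℂ) (z : ℂ) : Prop :=
  FinitePsegments (fun t => (γ t - z).re = 0) 0 1

theorem finite_ReZ_segments_linepath (a b z : ℂ) :
    finiteReZSegments (fun t : ℝ => (1 - (t : ℂ)) * a + (t : ℂ) * b) z := by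
  unfold finiteReZSegments
  set P : ℝ → Prop := fun t => (((1 - (t : ℂ)) * a + (t : ℂ) * b - z)).re = 0 with hP
  have key : ∀ t : ℝ, P t ↔ (a.re - z.re) + t * (b.re - a.re) = 0 := by
    intro t
    simp only [hP, Complex.add_re, Complex.sub_re, Complex.mul_re, Complex.one_re,
      Complex.one_im, Complex.sub_im, Complex.ofReal_re, Complex.ofReal_im]
    constructor <;> intro h <;> nlinarith [h]
  set c := a.re - z.re
  set d := b.re - a.re
  by_cases hd : d = 0
  · by_cases hc : c = 0
    · refine FinitePsegments.insertI_1 0 1 0 (by simp) (Or.inl rfl) ?_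
        (FinitePsegments.emptyI 0 0 le_rfl)
      intro t _
      rw [key]; rw [hd, hc]; ring
    · refine FinitePsegments.insertI_2 0 1 0 (by simp) (Or.inl rfl) ?_
        (FinitePsegments.emptyI 0 0 le_rfl)
      intro t _
      rw [key, hd]
      simpa using hc
  · -- unique root t₀ = -c/d
    set t₀ := -c / d with ht₀
    have root : ∀ t : ℝ, P t ↔ t = t₀ := by
      intro t
      rw [key]
      constructor
      · intro h
        rw [ht₀, eq_div_iff hd]
        linarith
      · intro h
        subst h
        rw [ht₀]
        field_simp
        ring
    by_cases h1 : 0 < t₀ ∧ t₀ < 1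
    · refine FinitePsegments.insertI_2 0 1 t₀ ⟨le_of_lt h1.1, h1.2⟩
        (Or.inr ((root t₀).2 rfl)) ?_ ?_
      · intro t ht
        rw [root]
        exact ne_of_gt ht.1
      · refine FinitePsegments.insertI_2 0 t₀ 0 ⟨le_rfl, h1.1⟩ (Or.inl rfl) ?_
          (FinitePsegments.emptyI 0 0 le_rfl)
        intro t ht
        rw [root]
        exact ne_of_lt ht.2
    · refine FinitePsegments.insertI_2 0 1 0 (by simp) (Or.inl rfl) ?_
        (FinitePsegments.emptyI 0 0 le_rfl)
      intro t ht
      rw [root]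
      push_neg at h1
      rcases le_or_gt t₀ 0 with h | h
      · exact ne_of_gt (lt_of_le_of_lt h ht.1)
      · exact ne_of_lt (lt_of_lt_of_le ht.2 (h1 h))
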